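/- arXiv:0804.2512 — 3 statements merged into one kernel-verified Lean document; each statement's English description precedes it below -/
import Mathlib

section
/- Let γ(λ) be the inverse of γ ↦ exp(ψ(γ)) on (0,∞). Then as λ → +∞, γ(λ) = λ + o(λ); equivalently, lim_{λ→∞} γ(λ)/λ = 1. -/
open Real Filter

/-- The digamma function `ψ = Γ'/Γ`. -/
noncomputable def digamma (x : ℝ) : ℝ := deriv Real.Gamma x / Real.Gamma x

lemma hasDerivAt_logGamma {x : ℝ} (hx : 0 < x) :
    HasDerivAt (Real.log ∘ Real.Gamma) (digamma x) x := by
  have hne : ∀ m : ℕ, x ≠ -m := by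
    intro m
    have : (0:ℝ) ≤ m := Nat.cast_nonneg m
    nlinarith [hx]
  have hd : HasDerivAt Real.Gamma (deriv Real.Gamma x) x :=
    (Real.differentiableAt_Gamma hne).hasDerivAt
  exact hd.log (Real.Gamma_pos_of_pos hx).ne'

lemma slope_logGamma {x : ℝ} (hx : 0 < x) :
    slope (Real.log ∘ Real.Gamma) x (x + 1) = Real.log x := by
  rw [slope_def_field]
  simp only [Function.comp_apply]
  rw [Real.Gamma_add_one hx.ne',
    Real.log_mul hx.ne' (Real.Gamma_pos_of_pos hx).ne']
  field_simp
  ring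

lemma digamma_le_log {x : ℝ} (hx : 0 < x) : digamma x ≤ Real.log x := by
  have h := Real.convexOn_log_Gamma.le_slope_of_hasDerivAt (Set.mem_Ioi.2 hx)
    (Set.mem_Ioi.2 (by linarith : (0:ℝ) < x + 1)) (by linarith)
    (hasDerivAt_logGamma hx)
  rwa [slope_logGamma hx] at h

lemma log_le_digamma_add_one {x : ℝ} (hx : 0 < x) :
    Real.log x ≤ digamma (x + 1) := by
  have h := Real.convexOn_log_Gamma.slope_le_of_hasDerivAt (Set.mem_Ioi.2 hx)
    (Set.mem_Ioi.2 (by linarith : (0:ℝ) < x + 1)) (by linarith)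
    (hasDerivAt_logGamma (by linarith : (0:ℝ) < x + 1))
  rwa [slope_logGamma hx] at h

theorem gamma_of_lam_asymp_at_top (γfun : ℝ → ℝ)
    (hγ : ∀ lam : ℝ, 0 < lam →
      0 < γfun lam ∧ Real.exp (digamma (γfun lam)) = lam) :
    Filter.Tendsto (fun lam : ℝ => γfun lam / lam) Filter.atTop (nhds 1) := by
  have key : ∀ lam : ℝ, 1 < lam → lam ≤ γfun lam ∧ γfun lam ≤ lam + 1 := by
    intro lam hlam
    have hlam0 : 0 < lam := by linarith
    obtain ⟨hg0, heq⟩ := hγ lam hlam0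
    have hψ : digamma (γfun lam) = Real.log lam := by
      have := congrArg Real.log heq
      rwa [Real.log_exp] at this
    -- lower bound
    have h1 : lam ≤ γfun lam := by
      have := digamma_le_log hg0
      rw [hψ] at this
      exact (Real.log_le_log_iff hlam0 hg0).mp this
    refine ⟨h1, ?_⟩
    -- upper bound
    have hg1 : 1 < γfun lam := lt_of_lt_of_le hlam h1
    have hx : 0 < γfun lam - 1 := by linarith
    have h2 := log_le_digamma_add_one hx
    rw [sub_add_cancel, hψ] at h2
    have := (Real.log_le_log_iff hx hlam0).mp h2
    linarith
  have hlo : ∀ᶠ lam : ℝ in atTop, (1:ℝ) ≤ γfun lam / lam := by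
    filter_upwards [eventually_gt_atTop (1:ℝ)] with lam hlam
    have h := (key lam hlam).1
    rw [le_div_iff₀ (by linarith : (0:ℝ) < lam)]
    linarith
  have hhi : ∀ᶠ lam : ℝ in atTop, γfun lam / lam ≤ 1 + 1 / lam := by
    filter_upwards [eventually_gt_atTop (1:ℝ)] with lam hlam
    have h := (key lam hlam).2
    rw [div_le_iff₀ (by linarith : (0:ℝ) < lam)]
    have : (1 + 1 / lam) * lam = lam + 1 := by field_simp
    rw [this]
    exact h
  have h1 : Tendsto (fun _ : ℝ => (1:ℝ)) atTop (nhds 1) := tendsto_const_nhds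
  have h2 : Tendsto (fun lam : ℝ => 1 + 1 / lam) atTop (nhds 1) := by
    have h := Filter.Tendsto.const_add (1:ℝ)
      (tendsto_inv_atTop_zero (𝕜 := ℝ))
    simpa [one_div] using h
  exact tendsto_of_tendsto_of_tendsto_of_le_of_le' h1 h2 hlo hhi
end

section
/- For every λ > 0 and every n ≥ 1, the function F_n(λ) = ∫_{H_n} exp(-λ Σ_{k=1}^n e^{x_k}) dx is finite, positive, and strictly decreasing in λ on (0, ∞). -/
open MeasureTheory Real Set

/-- The Mellin–Barnes function `F n λ`. -/
noncomputable def MellinBarnesF (n : ℕ) (lam : ℝ) : ℝ :=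
  ∫ x : Fin (n - 1) → ℝ,
    Real.exp (-lam * ((∑ k, Real.exp (x k)) + Real.exp (-∑ k, x k)))

namespace MBaux

/-- Integrability of `exp (-c * |x|)` on `ℝ`. -/
lemma integrable_exp_neg_abs {c : ℝ} (hc : 0 < c) :
    Integrable (fun x : ℝ => Real.exp (-c * |x|)) := by
  have h1 : IntegrableOn (fun x : ℝ => Real.exp (-c * |x|)) (Ici 0) := by
    rw [integrableOn_Ici_iff_integrableOn_Ioi]
    apply (exp_neg_integrableOn_Ioi 0 hc).congr_fun _ measurableSet_Ioi
    intro x hx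
    simp [abs_of_pos (mem_Ioi.mp hx)]
  have h2 : IntegrableOn (fun x : ℝ => Real.exp (-c * |x|)) (Iic 0) := by
    rw [← Measure.map_neg_eq_self (volume : Measure ℝ)]
    have hm : MeasurableEmbedding fun x : ℝ => -x := (Homeomorph.neg ℝ).measurableEmbedding
    rw [hm.integrableOn_map_iff]
    simp_rw [Function.comp_def, abs_neg, neg_preimage, neg_Iic, neg_zero]
    exact h1
  have := h2.union ((integrableOn_Ici_iff_integrableOn_Ioi).mp h1)
  rwa [Iic_union_Ioi, integrableOn_univ] at this

variable {m : ℕ}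

/-- The exponent function. -/
noncomputable def S (x : Fin m → ℝ) : ℝ :=
  (∑ k, Real.exp (x k)) + Real.exp (-∑ k, x k)

lemma S_pos (x : Fin m → ℝ) : 0 < S x := by
  have h1 : 0 ≤ ∑ k, Real.exp (x k) :=
    Finset.sum_nonneg fun i _ => (Real.exp_pos _).le
  have h2 : 0 < Real.exp (-∑ k, x k) := Real.exp_pos _
  unfold S; linarith

lemma abs_le_S (x : Fin m → ℝ) (j : Fin m) : |x j| ≤ S x := by
  have hsum : 0 ≤ ∑ k, Real.exp (x k) :=
    Finset.sum_nonneg fun i _ => (Real.exp_pos _).le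
  have hle : Real.exp (x j) ≤ ∑ k, Real.exp (x k) :=
    Finset.single_le_sum (fun i _ => (Real.exp_pos (x i)).le) (Finset.mem_univ j)
  rw [abs_le]
  constructor
  · -- -S x ≤ x j, i.e. -x j ≤ S x
    rw [neg_le]
    have key : -x j = (∑ i ∈ Finset.univ.erase j, x i) + (-∑ i, x i) := by
      rw [Finset.sum_erase_eq_sub (Finset.mem_univ j)]
      ring
    have h1 : (∑ i ∈ Finset.univ.erase j, x i) ≤ ∑ i ∈ Finset.univ.erase j, Real.exp (x i) :=
      Finset.sum_le_sum fun i _ => by linarith [Real.add_one_le_exp (x i)]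
    have h2 : (∑ i ∈ Finset.univ.erase j, Real.exp (x i)) ≤ ∑ i, Real.exp (x i) :=
      Finset.sum_le_sum_of_subset_of_nonneg (Finset.erase_subset _ _)
        (fun i _ _ => (Real.exp_pos _).le)
    have h3 : (-∑ i, x i) ≤ Real.exp (-∑ i, x i) := by
      linarith [Real.add_one_le_exp (-∑ i, x i)]
    unfold S; linarith
  · -- x j ≤ S x
    have h3 : x j ≤ Real.exp (x j) := by linarith [Real.add_one_le_exp (x j)]
    have h4 : 0 < Real.exp (-∑ i, x i) := Real.exp_pos _
    unfold S; linarith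

lemma key_bound {lam : ℝ} (hlam : 0 < lam) (x : Fin m → ℝ) :
    Real.exp (-lam * S x) ≤ ∏ j, Real.exp (-(lam / max (m : ℝ) 1) * |x j|) := by
  set c : ℝ := lam / max (m : ℝ) 1 with hc
  have hmax : (0 : ℝ) < max (m : ℝ) 1 := lt_max_of_lt_right one_pos
  have hcpos : 0 < c := div_pos hlam hmax
  rw [← Real.exp_sum]
  apply Real.exp_le_exp.mpr
  have hsum : ∑ j, -c * |x j| = -(c * ∑ j, |x j|) := by
    rw [Finset.mul_sum]; simp [neg_mul]
  rw [hsum, neg_mul, neg_le_neg_iff]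
  have h1 : ∑ j, |x j| ≤ (m : ℝ) * S x := by
    calc ∑ j, |x j| ≤ ∑ _j : Fin m, S x := Finset.sum_le_sum fun j _ => abs_le_S x j
    _ = (m : ℝ) * S x := by simp [Finset.sum_const, Finset.card_univ]
  have hS : 0 ≤ S x := (S_pos x).le
  have hcm : c * (m : ℝ) ≤ lam := by
    rw [hc, div_mul_eq_mul_div, div_le_iff₀ hmax]
    exact mul_le_mul_of_nonneg_left (le_max_left _ _) hlam.le
  calc c * ∑ j, |x j| ≤ c * ((m : ℝ) * S x) :=
        mul_le_mul_of_nonneg_left h1 hcpos.le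
    _ = c * (m : ℝ) * S x := by ring
    _ ≤ lam * S x := mul_le_mul_of_nonneg_right hcm hS

lemma integrable_S {lam : ℝ} (hlam : 0 < lam) :
    Integrable (fun x : Fin m → ℝ => Real.exp (-lam * S x)) := by
  have hmax : (0 : ℝ) < max (m : ℝ) 1 := lt_max_of_lt_right one_pos
  have hcpos : 0 < lam / max (m : ℝ) 1 := div_pos hlam hmax
  have hg : Integrable (fun x : Fin m → ℝ =>
      ∏ j, Real.exp (-(lam / max (m : ℝ) 1) * |x j|)) :=
    Integrable.fintype_prod fun _ => integrable_exp_neg_abs hcpos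
  apply hg.mono
  · apply Continuous.aestronglyMeasurable
    apply Real.continuous_exp.comp
    apply Continuous.mul continuous_const
    unfold S
    continuity
  · filter_upwards with x
    rw [Real.norm_eq_abs, Real.norm_eq_abs, abs_of_pos (Real.exp_pos _),
      abs_of_pos (Finset.prod_pos fun j _ => Real.exp_pos _)]
    exact key_bound hlam x

end MBaux

open MBaux

theorem F_finite_pos_strictAnti (n : ℕ) (hn : 1 ≤ n) :
    (∀ lam : ℝ, 0 < lam →
      MeasureTheory.Integrable (fun x : Fin (n - 1) → ℝ =>
        Real.exp (-lam * ((∑ k, Real.exp (x k)) + Real.exp (-∑ k, x k))))) ∧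
    (∀ lam : ℝ, 0 < lam → 0 < MellinBarnesF n lam) ∧
    StrictAntiOn (MellinBarnesF n) (Set.Ioi 0) := by
  set m := n - 1 with hm
  have hint : ∀ lam : ℝ, 0 < lam →
      Integrable (fun x : Fin m → ℝ =>
        Real.exp (-lam * ((∑ k, Real.exp (x k)) + Real.exp (-∑ k, x k)))) := by
    intro lam hlam
    exact integrable_S hlam
  refine ⟨hint, ?_, ?_⟩
  · intro lam hlam
    rw [MellinBarnesF]
    rw [integral_pos_iff_support_of_nonneg (fun x => (Real.exp_pos _).le) (hint lam hlam)]
    have : Function.support (fun x : Fin m → ℝ =>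
        Real.exp (-lam * ((∑ k, Real.exp (x k)) + Real.exp (-∑ k, x k)))) = Set.univ := by
      ext x; simp [Function.mem_support, (Real.exp_pos _).ne']
    rw [this]
    exact isOpen_univ.measure_pos volume univ_nonempty
  · intro a ha b hb hab
    have ha' : 0 < a := ha
    have hb' : 0 < b := hb
    rw [← sub_pos, MellinBarnesF, MellinBarnesF,
      ← integral_sub (hint a ha') (hint b hb')]
    have hintdiff : Integrable (fun x : Fin m → ℝ =>
        Real.exp (-a * ((∑ k, Real.exp (x k)) + Real.exp (-∑ k, x k))) -
        Real.exp (-b * ((∑ k, Real.exp (x k)) + Real.exp (-∑ k, x k)))) :=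
      (hint a ha').sub (hint b hb')
    have hnonneg : ∀ x : Fin m → ℝ,
        0 ≤ Real.exp (-a * ((∑ k, Real.exp (x k)) + Real.exp (-∑ k, x k))) -
        Real.exp (-b * ((∑ k, Real.exp (x k)) + Real.exp (-∑ k, x k))) := by
      intro x
      have hS := S_pos x
      have : -b * S x < -a * S x := by
        apply mul_lt_mul_of_pos_right _ hS
        linarith
      have := Real.exp_lt_exp.mpr this
      unfold S at *
      linarith
    rw [integral_pos_iff_support_of_nonneg hnonneg hintdiff]
    have hsupp : Function.support (fun x : Fin m → ℝ =>
        Real.exp (-a * ((∑ k, Real.exp (x k)) + Real.exp (-∑ k, x k))) -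
        Real.exp (-b * ((∑ k, Real.exp (x k)) + Real.exp (-∑ k, x k)))) = Set.univ := by
      ext x
      simp only [Function.mem_support, Set.mem_univ, iff_true]
      have hS := S_pos x
      have : -b * S x < -a * S x := by
        apply mul_lt_mul_of_pos_right _ hS
        linarith
      have := Real.exp_lt_exp.mpr this
      unfold S at *
      intro h
      linarith [sub_eq_zero.mp h]
    rw [hsupp]
    exact isOpen_univ.measure_pos volume univ_nonempty
end

section
/- For any positive reals f_1, ..., f_n with geometric mean ρ = (∏ f_k)^{1/n}, the substitution y_k ↦ ρ y_k / f_k maps the hypersphere M_{n,r} = {y ∈ ℝ_{>0}^n : ∏ y_k = r^n} bijectively onto itself and preserves the multiplicative Haar measure m_n; consequently ∫_{M_{n,r}} exp(-Σ f_k y_k) dm_n(y) = ∫_{M_{n,r}} exp(-ρ Σ y_k) dm_n(y). -/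
open MeasureTheory Real Set

/-- The point of the hypersphere `M_{n,r}` corresponding to the coordinates
`x ∈ ℝ^{n-1}` on the hyperplane `{Σ x_k = 0}`: `y_k = r·exp(x_k)` for
`k < n - 1` and `y_{n-1} = r·exp(-Σ x_j)`. -/
noncomputable def hypersphereCoord (n : ℕ) (r : ℝ) (x : Fin (n - 1) → ℝ)
    (k : Fin n) : ℝ :=
  if h : (k : ℕ) < n - 1 then r * Real.exp (x ⟨k, h⟩)
  else r * Real.exp (-∑ j, x j)

theorem substitution_preserves_hypersphere_and_integral
    (n : ℕ) (hn : 1 ≤ n) (r : ℝ) (hr : 0 < r)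
    (f : Fin n → ℝ) (hf : ∀ k, 0 < f k) :
    -- the substitution `y_k ↦ ρ y_k / f_k` maps `M_{n,r}` bijectively onto itself
    (Set.BijOn (fun y : Fin n → ℝ => fun k => (∏ j, f j) ^ ((1 : ℝ) / n) * y k / f k)
      {y : Fin n → ℝ | (∀ k, 0 < y k) ∧ ∏ k, y k = r ^ n}
      {y : Fin n → ℝ | (∀ k, 0 < y k) ∧ ∏ k, y k = r ^ n}) ∧
    -- consequently the Laplace transform depends only on the geometric mean:
    -- in the coordinates `x` on the hyperplane the measure `m_n` is Lebesgue measure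
    (∫ x : Fin (n - 1) → ℝ,
        Real.exp (-∑ k : Fin n, f k * hypersphereCoord n r x k)) =
      ∫ x : Fin (n - 1) → ℝ,
        Real.exp (-(∏ j, f j) ^ ((1 : ℝ) / n) *
          ∑ k : Fin n, hypersphereCoord n r x k) := by
  obtain ⟨m, rfl⟩ : ∃ m, n = m + 1 := ⟨n - 1, by omega⟩
  set ρ : ℝ := (∏ j, f j) ^ ((1 : ℝ) / (m + 1 : ℕ)) with hρ
  have hprod : 0 < ∏ j, f j := Finset.prod_pos (fun j _ => hf j)
  have hρpos : 0 < ρ := Real.rpow_pos_of_pos hprod _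
  have hρpow : ρ ^ (m + 1) = ∏ j, f j := by
    rw [hρ, ← Real.rpow_natCast (_ ^ _), ← Real.rpow_mul hprod.le]
    rw [show (1 : ℝ) / (m + 1 : ℕ) * ((m + 1 : ℕ) : ℝ) = 1 by
      field_simp]
    exact Real.rpow_one _
  have hlog : ((m : ℝ) + 1) * Real.log ρ = ∑ k, Real.log (f k) := by
    have h1 : Real.log ρ = (1 / (m + 1 : ℕ)) * Real.log (∏ j, f j) :=
      Real.log_rpow hprod _
    rw [h1, Real.log_prod (fun k _ => (hf k).ne')]
    push_cast
    field_simp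
  constructor
  · -- BijOn part
    set s : Set (Fin (m + 1) → ℝ) :=
      {y | (∀ k, 0 < y k) ∧ ∏ k, y k = r ^ (m + 1)} with hs
    set φ : (Fin (m + 1) → ℝ) → (Fin (m + 1) → ℝ) :=
      fun y k => ρ * y k / f k with hφ
    set ψ : (Fin (m + 1) → ℝ) → (Fin (m + 1) → ℝ) :=
      fun y k => f k * y k / ρ with hψ
    have hmaps : ∀ y ∈ s, φ y ∈ s := by
      rintro y ⟨hy, hyp⟩
      refine ⟨fun k => div_pos (mul_pos hρpos (hy k)) (hf k), ?_⟩
      show (∏ k, ρ * y k / f k) = r ^ (m + 1)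
      rw [Finset.prod_div_distrib, Finset.prod_mul_distrib,
        Finset.prod_const, Finset.card_univ, Fintype.card_fin, hρpow, hyp]
      field_simp
    have hmaps' : ∀ y ∈ s, ψ y ∈ s := by
      rintro y ⟨hy, hyp⟩
      refine ⟨fun k => div_pos (mul_pos (hf k) (hy k)) hρpos, ?_⟩
      show (∏ k, f k * y k / ρ) = r ^ (m + 1)
      rw [Finset.prod_div_distrib, Finset.prod_mul_distrib,
        Finset.prod_const, Finset.card_univ, Fintype.card_fin, ← hρpow, hyp]
      field_simp
    have hinv : Set.InvOn ψ φ s s := by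
      constructor
      · rintro y ⟨hy, -⟩
        funext k
        show f k * (ρ * y k / f k) / ρ = y k
        field_simp [hρpos.ne', (hf k).ne']
      · rintro y ⟨hy, -⟩
        funext k
        show ρ * (f k * y k / ρ) / f k = y k
        field_simp [hρpos.ne', (hf k).ne']
    exact hinv.bijOn hmaps hmaps'
  · -- integral part
    set c : Fin m → ℝ := fun j => Real.log ρ - Real.log (f j.castSucc) with hc
    have hsumc : ∑ j, c j = (m : ℝ) * Real.log ρ + Real.log (f (Fin.last m))
        - ∑ k, Real.log (f k) := by
      simp only [hc, Finset.sum_sub_distrib, Finset.sum_const, Finset.card_univ,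
        Fintype.card_fin, nsmul_eq_mul]
      rw [Fin.sum_univ_castSucc (f := fun k => Real.log (f k))]
      ring
    have hexpc : Real.exp (-∑ j, c j) = ρ / f (Fin.last m) := by
      rw [hsumc, ← hlog,
        show -((m : ℝ) * Real.log ρ + Real.log (f (Fin.last m))
          - ((m : ℝ) + 1) * Real.log ρ)
          = Real.log ρ - Real.log (f (Fin.last m)) by ring,
        Real.exp_sub, Real.exp_log hρpos, Real.exp_log (hf _)]
    have key : ∀ (x : Fin m → ℝ) (k : Fin (m + 1)),
        hypersphereCoord (m + 1) r (x + c) k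
          = ρ / f k * hypersphereCoord (m + 1) r x k := by
      intro x k
      unfold hypersphereCoord
      by_cases h : (k : ℕ) < m + 1 - 1
      · rw [dif_pos h, dif_pos h]
        simp only [Pi.add_apply]
        rw [Real.exp_add]
        have hcs : (⟨(k : ℕ), h⟩ : Fin m).castSucc = k := by
          ext; simp
        rw [hc]
        simp only [hcs]
        rw [Real.exp_sub, Real.exp_log hρpos, Real.exp_log (hf k)]
        ring
      · rw [dif_neg h, dif_neg h]
        have hk : k = Fin.last m := by
          have h1 := k.isLt
          ext
          simp only [Fin.val_last]
          omega
        subst hk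
        show r * Real.exp (-∑ j : Fin m, (x + c) j)
          = ρ / f (Fin.last m) * (r * Real.exp (-∑ j : Fin m, x j))
        have hsum : ∑ j : Fin m, (x + c) j = ∑ j : Fin m, x j + ∑ j : Fin m, c j := by
          simp [Finset.sum_add_distrib]
        rw [hsum, neg_add, Real.exp_add, hexpc]
        ring
    show (∫ x : Fin m → ℝ,
        Real.exp (-∑ k : Fin (m + 1), f k * hypersphereCoord (m + 1) r x k)) =
      ∫ x : Fin m → ℝ,
        Real.exp (-ρ * ∑ k : Fin (m + 1), hypersphereCoord (m + 1) r x k)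
    have htrans := MeasureTheory.integral_add_right_eq_self (μ := volume)
      (fun x : Fin m → ℝ =>
        Real.exp (-∑ k : Fin (m + 1), f k * hypersphereCoord (m + 1) r x k)) c
    rw [← htrans]
    congr 1
    funext x
    simp only [key]
    congr 1
    rw [neg_mul, neg_inj, Finset.mul_sum]
    exact Finset.sum_congr rfl fun k _ => by field_simp [(hf k).ne']
end
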